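/- For all natural numbers s and n, Σ_{j=0}^{n} (s)_{n−j} · φ(n,j,0) = (1/(2n)!) · iteratedDeriv (2n) (fun t : ℝ => (cosh t)^s) 0, as an identity of real numbers. -/

import Mathlib

/-- Auxiliary array realizing the triangular field `φ` on natural-number indices. -/
def phiN : ℕ → ℕ → ℕ → ℚ
  | 0, j, k => if j = 0 ∧ k = 0 then 1 else 0
  | n + 1, j, k =>
    if k ≤ j ∧ j ≤ n + 1 then
      ((if _hk : k = 0 then 0 else ((n : ℚ) + 2 - (j : ℚ)) * phiN (n + 1) (j - 1) (k - 1))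
        + ((k : ℚ) + 1) * phiN n j (k + 1) + phiN n j k) / (2 * ((n : ℚ) + 1) + (k : ℚ))
    else 0
termination_by n j k => (n, j)

/-- The triangular field `φ(n,j,k)` of rational numbers: `φ(n,j,k) = 0` unless
`0 ≤ k ≤ j ≤ n`, `φ(0,0,0) = 1`, and for `0 ≤ k ≤ j ≤ n` with `(n,j,k) ≠ (0,0,0)`,
`(2n+k)·φ(n,j,k) = (n-j+1)·φ(n,j-1,k-1) + (k+1)·φ(n-1,j,k+1) + φ(n-1,j,k)`. -/
def phi (n j k : ℤ) : ℚ :=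
  if 0 ≤ n ∧ 0 ≤ j ∧ 0 ≤ k then phiN n.toNat j.toNat k.toNat else 0



lemma phiN_eq_zero {n j k : ℕ} (h : ¬(k ≤ j ∧ j ≤ n)) : phiN n j k = 0 := by
  cases n with
  | zero => rw [phiN, if_neg (by omega)]
  | succ n => rw [phiN, if_neg h]

/-- per-point recurrence, valid for ALL j k. -/
lemma phiN_rec (n j k : ℕ) :
    (2 * ((n : ℚ) + 1) + k) * phiN (n + 1) j k =
      (if k = 0 ∨ j = 0 then 0 else ((n : ℚ) + 2 - (j : ℚ)) * phiN (n + 1) (j - 1) (k - 1))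
        + ((k : ℚ) + 1) * phiN n j (k + 1) + phiN n j k := by
  have hd : (2 * ((n : ℚ) + 1) + k) ≠ 0 := by positivity
  by_cases hjk : k ≤ j ∧ j ≤ n + 1
  · rw [phiN, if_pos hjk, mul_div_cancel₀ _ hd]
    rcases Nat.eq_zero_or_pos k with hk | hk
    · simp [hk]
    · rw [dif_neg (by omega), if_neg (by omega)]
  · rw [phiN_eq_zero hjk, mul_zero]
    rcases Nat.lt_or_ge j k with hlt | hge
    · -- j < k
      rw [phiN_eq_zero (show ¬(k + 1 ≤ j ∧ j ≤ n) by omega),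
        phiN_eq_zero (show ¬(k ≤ j ∧ j ≤ n) by omega)]
      rcases Nat.eq_zero_or_pos j with hj | hj
      · simp [hj]
      · rw [if_neg (by omega), phiN_eq_zero (show ¬(k - 1 ≤ j - 1 ∧ j - 1 ≤ n + 1) by omega)]
        ring
    · -- k ≤ j, so n + 1 < j
      have hjn : n + 1 < j := by omega
      rw [phiN_eq_zero (show ¬(k + 1 ≤ j ∧ j ≤ n) by omega),
        phiN_eq_zero (show ¬(k ≤ j ∧ j ≤ n) by omega)]
      rcases Nat.eq_zero_or_pos k with hk | hk
      · simp [hk]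
      rw [if_neg (by omega)]
      rcases eq_or_lt_of_le (by omega : n + 2 ≤ j) with hj2 | hj2
      · have : ((n : ℚ) + 2 - (j : ℚ)) = 0 := by
          rw [← hj2]; push_cast; ring
        rw [this]; ring
      · rw [phiN_eq_zero (by omega : ¬((k-1) ≤ j - 1 ∧ j - 1 ≤ n + 1))]; ring

def T (s n k : ℕ) : ℚ :=
  ∑ j ∈ Finset.range (n + 1), (s.descFactorial (n - j) : ℚ) * phiN n j k

lemma df_succ (s p : ℕ) :
    (s.descFactorial (p + 1) : ℚ) = (s : ℚ) * ((s - 1).descFactorial p : ℚ) := by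
  cases s with
  | zero => simp
  | succ s => rw [Nat.succ_descFactorial_succ]; push_cast; ring

lemma df_diff (s p : ℕ) :
    ((s + 1).descFactorial (p + 1) : ℚ) - (s.descFactorial (p + 1) : ℚ)
      = ((p : ℚ) + 1) * (s.descFactorial p : ℚ) := by
  rw [Nat.succ_descFactorial_succ, Nat.descFactorial_succ]
  rcases Nat.lt_or_ge s p with h | h
  · rw [Nat.descFactorial_eq_zero_iff_lt.mpr h]; push_cast; ring
  · push_cast [Nat.cast_sub h]; ring

lemma CORE (s n k : ℕ) :
    (2 * ((n : ℚ) + 1) + k) * T s (n + 1) k =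
      (s : ℚ) * ((k : ℚ) + 1) * T (s - 1) n (k + 1) + (s : ℚ) * T (s - 1) n k
        + (if k = 0 then 0 else T (s + 1) (n + 1) (k - 1) - T s (n + 1) (k - 1)) := by
  have expand : (2 * ((n : ℚ) + 1) + k) * T s (n + 1) k =
      (∑ j ∈ Finset.range (n + 2), (s.descFactorial (n + 1 - j) : ℚ) *
        (if k = 0 ∨ j = 0 then 0 else ((n : ℚ) + 2 - (j : ℚ)) * phiN (n + 1) (j - 1) (k - 1)))
      + ((k : ℚ) + 1) * (∑ j ∈ Finset.range (n + 2), (s.descFactorial (n + 1 - j) : ℚ) *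
          phiN n j (k + 1))
      + (∑ j ∈ Finset.range (n + 2), (s.descFactorial (n + 1 - j) : ℚ) * phiN n j k) := by
    rw [T, Finset.mul_sum, Finset.mul_sum, ← Finset.sum_add_distrib, ← Finset.sum_add_distrib]
    refine Finset.sum_congr rfl fun j _ => ?_
    rw [mul_left_comm, phiN_rec n j k]; ring
  have hB : ∀ k' : ℕ, (∑ j ∈ Finset.range (n + 2),
      (s.descFactorial (n + 1 - j) : ℚ) * phiN n j k') = (s : ℚ) * T (s - 1) n k' := by
    intro k'
    rw [Finset.sum_range_succ, phiN_eq_zero (by omega : ¬(k' ≤ n + 1 ∧ n + 1 ≤ n)),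
      mul_zero, add_zero, T, Finset.mul_sum]
    refine Finset.sum_congr rfl fun j hj => ?_
    have hj' : j ≤ n := by simpa [Nat.lt_succ_iff] using hj
    have : n + 1 - j = (n - j) + 1 := by omega
    rw [this, df_succ]; ring
  rw [expand, hB k, hB (k + 1)]
  have hA : (∑ j ∈ Finset.range (n + 2), (s.descFactorial (n + 1 - j) : ℚ) *
      (if k = 0 ∨ j = 0 then 0 else ((n : ℚ) + 2 - (j : ℚ)) * phiN (n + 1) (j - 1) (k - 1)))
      = (if k = 0 then 0 else T (s + 1) (n + 1) (k - 1) - T s (n + 1) (k - 1)) := by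
    rcases Nat.eq_zero_or_pos k with hk | hk
    · simp [hk]
    rw [if_neg (by omega)]
    rw [Finset.sum_range_succ']
    have hstep : ∀ i ∈ Finset.range (n + 1),
        (s.descFactorial (n + 1 - (i + 1)) : ℚ) *
          (if k = 0 ∨ i + 1 = 0 then 0
            else ((n : ℚ) + 2 - ((i + 1 : ℕ) : ℚ)) * phiN (n + 1) (i + 1 - 1) (k - 1))
        = (((s + 1).descFactorial (n + 1 - i) : ℚ) - (s.descFactorial (n + 1 - i) : ℚ))
            * phiN (n + 1) i (k - 1) := by
      intro i hi
      have hi' : i ≤ n := by simpa [Nat.lt_succ_iff] using hi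
      rw [if_neg (by omega), Nat.add_sub_cancel]
      have h1 : n + 1 - (i + 1) = n - i := by omega
      have h2 : n + 1 - i = (n - i) + 1 := by omega
      rw [h1, h2, df_diff]
      have : ((n : ℚ) + 2 - ((i + 1 : ℕ) : ℚ)) = ((n - i : ℕ) : ℚ) + 1 := by
        push_cast [Nat.cast_sub hi']; ring
      rw [this]; ring
    rw [Finset.sum_congr rfl hstep]
    simp only [eq_self_iff_true, or_true, if_true, mul_zero, add_zero]
    have : T (s + 1) (n + 1) (k - 1) - T s (n + 1) (k - 1) =
        ∑ j ∈ Finset.range (n + 2),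
          (((s + 1).descFactorial (n + 1 - j) : ℚ) - (s.descFactorial (n + 1 - j) : ℚ))
            * phiN (n + 1) j (k - 1) := by
      rw [T, T, ← Finset.sum_sub_distrib]
      refine Finset.sum_congr rfl fun j _ => ?_; ring
    rw [this]
    conv_rhs => rw [Finset.sum_range_succ]
    rw [Nat.sub_self, Nat.descFactorial_zero, Nat.descFactorial_zero]
    simp
  rw [hA]; push_cast; ring
def V (s m k : ℕ) : ℚ :=
  if k ≤ m ∧ (m - k) % 2 = 0 then
    (Nat.factorial m : ℚ) * (Nat.factorial k : ℚ) * T s ((m - k) / 2) k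
  else 0

lemma V_eq' (s n k m : ℕ) (h : m = 2 * n + k) :
    V s m k = (Nat.factorial m : ℚ) * (Nat.factorial k : ℚ) * T s n k := by
  subst h
  rw [V, if_pos (by omega)]
  congr 2
  omega

lemma V_zero (s m k : ℕ) (h : ¬(k ≤ m ∧ (m - k) % 2 = 0)) : V s m k = 0 := if_neg h

lemma T0 (s k : ℕ) : T s 0 k = phiN 0 0 k := by
  simp [T]

lemma KEYQ (s m k : ℕ) :
    V s (m + 1) k = (s : ℚ) * V (s - 1) m (k + 1) + (s : ℚ) * (m : ℚ) * V (s - 1) (m - 1) k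
      + (k : ℚ) * V (s + 1) m (k - 1) - (k : ℚ) * V s m (k - 1) := by
  by_cases hc : k ≤ m + 1 ∧ (m + 1 - k) % 2 = 0
  · rcases Nat.eq_zero_or_pos k with hk | hk
    · -- k = 0, so m + 1 = 2(n+1)
      subst hk
      obtain ⟨n, rfl⟩ : ∃ n, m = 2 * n + 1 := ⟨(m - 1) / 2, by omega⟩
      rw [V_eq' s (n + 1) 0 (2 * n + 1 + 1) (by ring),
        V_eq' (s - 1) n (0 + 1) (2 * n + 1) (by ring),
        V_eq' (s - 1) n 0 (2 * n + 1 - 1) (by omega)]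
      have hcore := CORE s n 0
      rw [if_pos rfl] at hcore
      have e0 : ((2 * n + 1 + 1).factorial : ℚ)
          = (2 * (n : ℚ) + 2) * (2 * (n : ℚ) + 1) * ((2 * n).factorial : ℚ) := by
        rw [Nat.factorial_succ, Nat.factorial_succ]; push_cast; ring
      have e1 : ((2 * n + 1).factorial : ℚ) = (2 * (n : ℚ) + 1) * ((2 * n).factorial : ℚ) := by
        rw [Nat.factorial_succ]; push_cast; ring
      have e2 : ((2 * n + 1 - 1).factorial : ℚ) = ((2 * n).factorial : ℚ) := by
        norm_num
      rw [e0, e1, e2]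
      norm_num at hcore ⊢
      linear_combination ((2 * n).factorial : ℚ) * (2 * (n : ℚ) + 1) * hcore
    · obtain ⟨k', rfl⟩ : ∃ k', k = k' + 1 := ⟨k - 1, by omega⟩
      simp only [Nat.add_sub_cancel]
      rcases Nat.eq_zero_or_pos (m - k') with hn0 | hn0
      · -- m = k'
        obtain rfl : k' = m := by omega
        rw [V_eq' s 0 (k' + 1) (k' + 1) (by ring),
          V_zero (s - 1) k' (k' + 1 + 1) (by omega),
          V_zero (s - 1) (k' - 1) (k' + 1) (by omega),
          V_eq' (s + 1) 0 k' k' (by ring),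
          V_eq' s 0 k' k' (by ring), T0, T0, T0]
        have hz : phiN 0 0 (k' + 1) = 0 := by
          rw [phiN, if_neg (by omega)]
        rw [hz]
        ring
      · -- m = 2(n+1) + k'
        obtain ⟨n, rfl⟩ : ∃ n, m = 2 * n + 2 + k' := ⟨(m - k' - 2) / 2, by omega⟩
        rw [V_eq' s (n + 1) (k' + 1) (2 * n + 2 + k' + 1) (by ring),
          V_eq' (s - 1) n (k' + 1 + 1) (2 * n + 2 + k') (by ring),
          V_eq' (s - 1) n (k' + 1) (2 * n + 2 + k' - 1) (by omega),
          V_eq' (s + 1) (n + 1) k' (2 * n + 2 + k') (by ring),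
          V_eq' s (n + 1) k' (2 * n + 2 + k') (by ring)]
        have hcore := CORE s n (k' + 1)
        rw [if_neg (Nat.succ_ne_zero k')] at hcore
        simp only [Nat.add_sub_cancel] at hcore
        set A : ℚ := ((2 * n + 1 + k').factorial : ℚ) with hA
        have e0 : ((2 * n + 2 + k' + 1).factorial : ℚ)
            = (2 * (n : ℚ) + 3 + k') * (2 * (n : ℚ) + 2 + k') * A := by
          rw [show 2 * n + 2 + k' + 1 = (2 * n + 1 + k') + 1 + 1 by ring,
            Nat.factorial_succ, Nat.factorial_succ, hA]
          push_cast; ring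
        have e1 : ((2 * n + 2 + k').factorial : ℚ) = (2 * (n : ℚ) + 2 + k') * A := by
          rw [show 2 * n + 2 + k' = (2 * n + 1 + k') + 1 by ring, Nat.factorial_succ, hA]
          push_cast; ring
        have e2 : ((2 * n + 2 + k' - 1).factorial : ℚ) = A := by
          rw [show 2 * n + 2 + k' - 1 = 2 * n + 1 + k' by omega, hA]
        have e3 : ((k' + 1 + 1).factorial : ℚ)
            = ((k' : ℚ) + 2) * ((k' : ℚ) + 1) * ((k'.factorial : ℚ)) := by
          rw [Nat.factorial_succ, Nat.factorial_succ]; push_cast; ring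
        have e4 : ((k' + 1).factorial : ℚ) = ((k' : ℚ) + 1) * (k'.factorial : ℚ) := by
          rw [Nat.factorial_succ]; push_cast; ring
        rw [e0, e1, e2, e3, e4]
        push_cast
        push_cast at hcore
        linear_combination (2 * (n : ℚ) + 2 + (k' : ℚ)) * A * ((k' : ℚ) + 1)
          * (k'.factorial : ℚ) * hcore
  · rw [V_zero s (m + 1) k hc,
      V_zero (s - 1) m (k + 1) (by omega)]
    have z2 : (s : ℚ) * (m : ℚ) * V (s - 1) (m - 1) k = 0 := by
      rcases Nat.eq_zero_or_pos m with hm | hm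
      · subst hm; simp
      · rw [V_zero (s - 1) (m - 1) k (by omega)]; ring
    have z3 : (k : ℚ) * V (s + 1) m (k - 1) = 0 := by
      rcases Nat.eq_zero_or_pos k with hkk | hkk
      · subst hkk; simp
      · rw [V_zero (s + 1) m (k - 1) (by omega)]; ring
    have z4 : (k : ℚ) * V s m (k - 1) = 0 := by
      rcases Nat.eq_zero_or_pos k with hkk | hkk
      · subst hkk; simp
      · rw [V_zero s m (k - 1) (by omega)]; ring
    rw [z2, z3, z4]
    ring
open scoped ContDiff in
lemma le_infty (m : ℕ) : (m : WithTop ℕ∞) ≤ ∞ := by exact_mod_cast le_top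

noncomputable def G (s k : ℕ) : ℝ → ℝ := fun u => Real.cosh u ^ s * (Real.sinh u - u) ^ k

lemma contDiff_G {n : WithTop ℕ∞} (s k : ℕ) : ContDiff ℝ n (G s k) :=
  (Real.contDiff_cosh.pow s).mul ((Real.contDiff_sinh.sub contDiff_id).pow k)

lemma derivG (s k : ℕ) (u : ℝ) :
    deriv (G s k) u = (s : ℝ) * G (s - 1) (k + 1) u + (s : ℝ) * (u * G (s - 1) k u)
      + (k : ℝ) * G (s + 1) (k - 1) u - (k : ℝ) * G s (k - 1) u := by
  have hc : HasDerivAt Real.cosh (Real.sinh u) u := Real.hasDerivAt_cosh u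
  have hs : HasDerivAt (fun x : ℝ => Real.sinh x - x) (Real.cosh u - 1) u :=
    (Real.hasDerivAt_sinh u).sub (hasDerivAt_id u)
  have h1 := hc.pow s
  have h2 := hs.pow k
  have H : HasDerivAt (fun y => Real.cosh y ^ s * (Real.sinh y - y) ^ k)
      ((s : ℝ) * Real.cosh u ^ (s - 1) * Real.sinh u * (Real.sinh u - u) ^ k
        + Real.cosh u ^ s * ((k : ℝ) * (Real.sinh u - u) ^ (k - 1) * (Real.cosh u - 1))) u :=
    h1.mul h2
  rw [show G s k = fun y => Real.cosh y ^ s * (Real.sinh y - y) ^ k from rfl, H.deriv]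
  obtain ⟨x, hx⟩ : ∃ x, Real.sinh u = x + u := ⟨Real.sinh u - u, by ring⟩
  simp only [G, hx, add_sub_cancel_right]
  cases s with
  | zero => cases k with
    | zero =>
        push_cast
        try simp only [Nat.add_sub_cancel, Nat.zero_sub, Nat.succ_sub_one, Nat.sub_zero, pow_zero]
        ring
    | succ k =>
        push_cast
        try simp only [Nat.add_sub_cancel, Nat.zero_sub, Nat.succ_sub_one, Nat.sub_zero, pow_zero]
        ring
  | succ s => cases k with
    | zero =>
        push_cast
        try simp only [Nat.add_sub_cancel, Nat.zero_sub, Nat.succ_sub_one, Nat.sub_zero, pow_zero]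
        ring
    | succ k =>
        push_cast
        try simp only [Nat.add_sub_cancel, Nat.zero_sub, Nat.succ_sub_one, Nat.sub_zero, pow_zero]
        ring

open scoped ContDiff

lemma itD_add (f g : ℝ → ℝ) (hf : ContDiff ℝ ∞ f) (hg : ContDiff ℝ ∞ g) (m : ℕ) (x : ℝ) :
    iteratedDeriv m (fun u => f u + g u) x = iteratedDeriv m f x + iteratedDeriv m g x := by
  simp only [← iteratedDerivWithin_univ]
  exact iteratedDerivWithin_add (Set.mem_univ x) uniqueDiffOn_univ
    ((hf.of_le (le_infty m)).contDiffWithinAt) ((hg.of_le (le_infty m)).contDiffWithinAt)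

lemma itD_sub (f g : ℝ → ℝ) (hf : ContDiff ℝ ∞ f) (hg : ContDiff ℝ ∞ g) (m : ℕ) (x : ℝ) :
    iteratedDeriv m (fun u => f u - g u) x = iteratedDeriv m f x - iteratedDeriv m g x := by
  simp only [← iteratedDerivWithin_univ]
  exact iteratedDerivWithin_sub (Set.mem_univ x) uniqueDiffOn_univ
    ((hf.of_le (le_infty m)).contDiffWithinAt) ((hg.of_le (le_infty m)).contDiffWithinAt)

lemma itD_cmul (c : ℝ) (f : ℝ → ℝ) (hf : ContDiff ℝ ∞ f) (m : ℕ) (x : ℝ) :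
    iteratedDeriv m (fun u => c * f u) x = c * iteratedDeriv m f x := by
  simp only [← iteratedDerivWithin_univ]
  exact iteratedDerivWithin_const_mul (Set.mem_univ x) uniqueDiffOn_univ c
    ((hf.of_le (le_infty m)).contDiffWithinAt)

lemma itD_idmul (h : ℝ → ℝ) (hh : ContDiff ℝ ∞ h) (m : ℕ) :
    iteratedDeriv m (fun u : ℝ => u * h u) 0 = (m : ℝ) * iteratedDeriv (m - 1) h 0 := by
  induction m generalizing h with
  | zero => simp
  | succ m ih =>
    have hd : ContDiff ℝ ∞ (deriv h) := (contDiff_infty_iff_deriv.mp hh).2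
    have hder : deriv (fun u : ℝ => u * h u) = fun u => h u + u * deriv h u := by
      funext u
      have hD : deriv (fun u : ℝ => id u * h u) u = 1 * h u + id u * deriv h u :=
        ((hasDerivAt_id u).mul (hh.differentiable (by simp) u).hasDerivAt).deriv
      simp only [id_eq] at hD
      rw [hD]
      ring
    rw [iteratedDeriv_succ', hder,
      itD_add h (fun u => u * deriv h u) hh (contDiff_id.mul hd) m 0, ih (deriv h) hd]
    cases m with
    | zero => simp
    | succ m' =>
      rw [show iteratedDeriv (m' + 1 - 1) (deriv h) = iteratedDeriv (m' + 1) h by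
        rw [Nat.add_sub_cancel, ← iteratedDeriv_succ']]
      rw [Nat.add_sub_cancel]
      push_cast
      ring

lemma MAIN (m : ℕ) : ∀ s k : ℕ, iteratedDeriv m (G s k) 0 = ((V s m k : ℚ) : ℝ) := by
  induction m using Nat.strong_induction_on with
  | _ m ih =>
    intro s k
    cases m with
    | zero =>
      rw [iteratedDeriv_zero]
      cases k with
      | zero =>
        rw [V_eq' s 0 0 0 (by ring)]
        simp [G, T, phiN]
      | succ k =>
        rw [V_zero s 0 (k + 1) (by omega)]
        simp [G, zero_pow (Nat.succ_ne_zero k)]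
    | succ m =>
      rw [iteratedDeriv_succ']
      have hder : deriv (G s k) = fun u =>
          ((s : ℝ) * G (s - 1) (k + 1) u + (s : ℝ) * (u * G (s - 1) k u))
          + ((k : ℝ) * G (s + 1) (k - 1) u - (k : ℝ) * G s (k - 1) u) := by
        funext u
        rw [derivG]
        ring
      rw [hder]
      have cB0 : ContDiff ℝ ∞ (fun u : ℝ => u * G (s - 1) k u) :=
        contDiff_id.mul (contDiff_G _ _)
      rw [itD_add (fun u => (s : ℝ) * G (s - 1) (k + 1) u + (s : ℝ) * (u * G (s - 1) k u))
            (fun u => (k : ℝ) * G (s + 1) (k - 1) u - (k : ℝ) * G s (k - 1) u)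
            ((contDiff_const.mul (contDiff_G _ _)).add (contDiff_const.mul cB0))
            ((contDiff_const.mul (contDiff_G _ _)).sub (contDiff_const.mul (contDiff_G _ _))) m 0,
          itD_add (fun u => (s : ℝ) * G (s - 1) (k + 1) u)
            (fun u => (s : ℝ) * (u * G (s - 1) k u))
            (contDiff_const.mul (contDiff_G _ _)) (contDiff_const.mul cB0) m 0,
          itD_sub (fun u => (k : ℝ) * G (s + 1) (k - 1) u) (fun u => (k : ℝ) * G s (k - 1) u)
            (contDiff_const.mul (contDiff_G _ _)) (contDiff_const.mul (contDiff_G _ _)) m 0,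
          itD_cmul ((s : ℝ)) (G (s - 1) (k + 1)) (contDiff_G _ _) m 0,
          itD_cmul ((s : ℝ)) (fun u : ℝ => u * G (s - 1) k u) cB0 m 0,
          itD_cmul ((k : ℝ)) (G (s + 1) (k - 1)) (contDiff_G _ _) m 0,
          itD_cmul ((k : ℝ)) (G s (k - 1)) (contDiff_G _ _) m 0,
          itD_idmul (G (s - 1) k) (contDiff_G _ _) m]
      rw [ih m (Nat.lt_succ_self m) (s - 1) (k + 1),
        ih (m - 1) (by omega) (s - 1) k,
        ih m (Nat.lt_succ_self m) (s + 1) (k - 1),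
        ih m (Nat.lt_succ_self m) s (k - 1)]
      have := KEYQ s m k
      push_cast [this]
      ring


/-- `∑_{j=0}^n (s)_{n-j} · φ(n,j,0) = (1/(2n)!) · [ (cosh t ^ s)^{(2n)} ]_{t=0}`. -/
theorem stmt14 (s n : ℕ) :
    ∑ j ∈ Finset.range (n + 1),
        (s.descFactorial (n - j) : ℝ) * ((phi (n : ℤ) (j : ℤ) 0 : ℚ) : ℝ)
      = (1 / (Nat.factorial (2 * n) : ℝ))
          * iteratedDeriv (2 * n) (fun t : ℝ => Real.cosh t ^ s) 0 := by
  have h1 : (fun t : ℝ => Real.cosh t ^ s) = G s 0 := by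
    funext t; simp [G]
  rw [h1, MAIN (2 * n) s 0, V_eq' s n 0 (2 * n) (by ring)]
  have hphi : ∀ j : ℕ, ((phi (n : ℤ) (j : ℤ) 0 : ℚ) : ℝ) = ((phiN n j 0 : ℚ) : ℝ) := by
    intro j
    have h : phi (n : ℤ) (j : ℤ) 0 = phiN n j 0 := by
      rw [phi, if_pos ⟨Int.natCast_nonneg n, Int.natCast_nonneg j, le_refl 0⟩]
      simp
    rw [h]
  simp only [hphi]
  have hfac : ((2 * n).factorial : ℝ) ≠ 0 := Nat.cast_ne_zero.mpr (Nat.factorial_ne_zero _)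
  rw [T]
  push_cast
  field_simp
  simp
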